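/- Let V_n = max{Z₁,…,Z_n} be the maximum of n i.i.d. standard Gaussians and let b_n = √(2 log n) − log(4π log n)/√(8 log n). For every θ > 0 there is a constant γ(θ) > 0 such that E[exp(−θ max{V_n, 0}²)] ≤ γ(θ) exp(−θ b_n²) for all n ≥ 1. -/

import Mathlib

set_option maxHeartbeats 1000000

open MeasureTheory ProbabilityTheory Real

/-- The centering constant `b_n = √(2 log n) − log(4π log n)/√(8 log n)`. -/
noncomputable def bConst (n : ℕ) : ℝ :=
  Real.sqrt (2 * Real.log n)
    - Real.log (4 * Real.pi * Real.log n) / Real.sqrt (8 * Real.log n)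

open Filter Finset Set

noncomputable def PhiR (t : ℝ) : ℝ := ((gaussianReal 0 1) (Set.Iic t)).toReal
noncomputable def PsiR (t : ℝ) : ℝ := ((gaussianReal 0 1) (Set.Ioi t)).toReal


lemma phi_add_psi (t : ℝ) : PhiR t + PsiR t = 1 := by
  have h : (gaussianReal 0 1) (Set.Iic t) + (gaussianReal 0 1) (Set.Ioi t) = 1 := by
    have := measure_add_measure_compl (μ := gaussianReal 0 1) (measurableSet_Iic (a := t))
    rwa [Set.compl_Iic, measure_univ] at this
  have h1 : (gaussianReal 0 1) (Set.Iic t) ≠ ⊤ := measure_ne_top _ _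
  have h2 : (gaussianReal 0 1) (Set.Ioi t) ≠ ⊤ := measure_ne_top _ _
  rw [PhiR, PsiR, ← ENNReal.toReal_add h1 h2, h, ENNReal.toReal_one]

lemma pdf_anti {x y : ℝ} (hx : 0 ≤ x) (hxy : x ≤ y) :
    gaussianPDFReal 0 1 y ≤ gaussianPDFReal 0 1 x := by
  simp only [gaussianPDFReal, NNReal.coe_one, mul_one, sub_zero]
  gcongr

lemma psi_ge {a : ℝ} (ha : 1 ≤ a) :
    Real.exp (-(3/2)) * gaussianPDFReal 0 1 a / a ≤ PsiR a := by
  have ha0 : 0 < a := lt_of_lt_of_le one_pos ha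
  set c := a + 1/a with hc
  have hac : a < c := lt_add_of_pos_right a (by positivity)
  have hsub : Set.Ioc a c ⊆ Set.Ioi a := Set.Ioc_subset_Ioi_self
  have hmono := measure_mono (μ := gaussianReal 0 1) hsub
  have happ : (gaussianReal 0 1) (Set.Ioc a c)
      = ENNReal.ofReal (∫ x in Set.Ioc a c, gaussianPDFReal 0 1 x) :=
    gaussianReal_apply_eq_integral 0 one_ne_zero _
  have hint : (c - a) * gaussianPDFReal 0 1 c ≤ ∫ x in Set.Ioc a c, gaussianPDFReal 0 1 x := by
    have h1 : ∫ _x in Set.Ioc a c, gaussianPDFReal 0 1 c ∂(volume)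
        = (c - a) * gaussianPDFReal 0 1 c := by
      rw [setIntegral_const, measureReal_def, Real.volume_Ioc, ENNReal.toReal_ofReal (by linarith)]
      simp [smul_eq_mul]
    rw [← h1]
    refine setIntegral_mono_on (integrableOn_const ?_)
      ((integrable_gaussianPDFReal 0 1).integrableOn) measurableSet_Ioc ?_
    · rw [Real.volume_Ioc]; exact ENNReal.ofReal_lt_top.ne
    · intro x hx
      exact pdf_anti (lt_of_lt_of_le ha0 hx.1.le).le hx.2
  have hpdfc : Real.exp (-(3/2)) * gaussianPDFReal 0 1 a ≤ gaussianPDFReal 0 1 c := by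
    simp only [gaussianPDFReal, NNReal.coe_one, mul_one, sub_zero]
    rw [← mul_assoc, mul_comm (Real.exp (-(3/2))), mul_assoc, ← Real.exp_add]
    have h3 : 1/a^2 ≤ 1 := by
      rw [div_le_one (by positivity)]; nlinarith
    have h2 : c^2 = a^2 + 2 + 1/a^2 := by rw [hc]; field_simp; ring
    refine mul_le_mul_of_nonneg_left ?_ (by positivity)
    exact Real.exp_le_exp.2 (by nlinarith)
  have hlen : c - a = 1/a := by rw [hc]; ring
  calc Real.exp (-(3/2)) * gaussianPDFReal 0 1 a / a
      ≤ (c - a) * gaussianPDFReal 0 1 c := by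
        rw [hlen, div_eq_mul_one_div, mul_comm (1/a) (gaussianPDFReal 0 1 c)]
        exact mul_le_mul_of_nonneg_right hpdfc (by positivity)
    _ ≤ ∫ x in Set.Ioc a c, gaussianPDFReal 0 1 x := hint
    _ = ((gaussianReal 0 1) (Set.Ioc a c)).toReal := by
        rw [happ, ENNReal.toReal_ofReal]
        exact setIntegral_nonneg measurableSet_Ioc (fun x _ => gaussianPDFReal_nonneg 0 1 x)
    _ ≤ PsiR a := ENNReal.toReal_mono (measure_ne_top _ _) hmono

lemma sqrt_two_pi_le : Real.sqrt (2*Real.pi) ≤ 2.51 := by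
  rw [show (2.51:ℝ) = Real.sqrt (2.51^2) from (Real.sqrt_sq (by norm_num)).symm]
  apply Real.sqrt_le_sqrt
  nlinarith [Real.pi_lt_d2]

lemma exp_two_le : Real.exp 2 ≤ 7.39 := by
  have h := Real.exp_one_lt_d9.le
  calc Real.exp 2 = Real.exp 1 ^ 2 := by rw [← Real.exp_nat_mul]; norm_num
    _ ≤ 2.7182818286^2 := by gcongr
    _ ≤ 7.39 := by norm_num

lemma exp_threehalf_le : Real.exp (3/2) ≤ 4.5 := by
  have h3 : Real.exp 3 ≤ 20.25 := by
    have h := Real.exp_one_lt_d9.le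
    calc Real.exp 3 = Real.exp 1 ^ 3 := by rw [← Real.exp_nat_mul]; norm_num
      _ ≤ 2.7182818286^3 := by gcongr
      _ ≤ 20.25 := by norm_num
  nlinarith [Real.exp_pos (3/2), sq_nonneg (Real.exp (3/2)),
    (by rw [← Real.exp_add]; norm_num : Real.exp (3/2) * Real.exp (3/2) = Real.exp 3)]

lemma psi_one : (1:ℝ)/25 ≤ PsiR 1 := by
  have h := psi_ge (le_refl 1)
  have hpdf : gaussianPDFReal 0 1 1 = (Real.sqrt (2*Real.pi))⁻¹ * Real.exp (-(1/2)) := by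
    simp only [gaussianPDFReal, NNReal.coe_one, mul_one, sub_zero]
    norm_num
  rw [hpdf] at h
  refine le_trans ?_ h
  rw [div_one, ← mul_assoc, mul_comm (Real.exp (-(3/2))), mul_assoc, ← Real.exp_add]
  have h1 : Real.exp (-(3/2) + -(1/2)) = (Real.exp 2)⁻¹ := by
    rw [← Real.exp_neg]; norm_num
  rw [h1]
  rw [div_eq_mul_inv, one_mul, ← mul_inv]
  apply inv_anti₀
  · positivity
  · calc Real.sqrt (2*Real.pi) * Real.exp 2 ≤ 2.51 * 7.39 :=
        mul_le_mul sqrt_two_pi_le exp_two_le (Real.exp_pos 2).le (by norm_num)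
    _ ≤ 25 := by norm_num

lemma exp_three_ge : (12.6:ℝ) ≤ Real.exp 3 := by
  have h := Real.exp_one_gt_d9.le
  calc (12.6:ℝ) ≤ 2.7182818283^3 := by norm_num
    _ ≤ Real.exp 1 ^ 3 := by gcongr
    _ = Real.exp 3 := by rw [← Real.exp_nat_mul]; norm_num

lemma bFacts (n : ℕ) (h2 : 2 ≤ n) (h9 : 9 ≤ Real.log n) :
    1 ≤ bConst n ∧ bConst n ^ 2 ≤ 2 * Real.log n ∧
    1/2 ≤ (n:ℝ) * gaussianPDFReal 0 1 (bConst n) / bConst n := by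
  set L := Real.log n with hLdef
  clear_value L
  have hL0 : 0 < L := by linarith
  set s := Real.sqrt L with hsdef
  clear_value s
  have hs2 : s^2 = L := by rw [hsdef]; exact Real.sq_sqrt hL0.le
  have hs0 : 0 < s := by rw [hsdef]; exact Real.sqrt_pos.2 hL0
  have hs3 : 3 ≤ s := by nlinarith
  set u := Real.sqrt (2*L) with hudef
  clear_value u
  have hu2 : u^2 = 2*L := by rw [hudef]; exact Real.sq_sqrt (by linarith)
  have hu0 : 0 < u := by rw [hudef]; exact Real.sqrt_pos.2 (by linarith)
  have hu4 : 4 ≤ u := by nlinarith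
  have hsu : s ≤ u := by nlinarith
  set M := Real.log (4*Real.pi*L) with hMdef
  clear_value M
  have hpi := Real.pi_gt_three
  have hpi' := Real.pi_lt_d2
  have hM0 : 0 ≤ M := by rw [hMdef]; exact Real.log_nonneg (by nlinarith)
  have hMub : M ≤ 3 + 2*s := by
    have h4pi : Real.log (4*Real.pi) ≤ 3 := by
      rw [Real.log_le_iff_le_exp (by positivity)]
      nlinarith [exp_three_ge]
    have hlogs : Real.log s ≤ s := (Real.log_le_sub_one_of_pos hs0).trans (by linarith)
    have hlogL : Real.log L ≤ 2*s := by
      rw [← hs2, show s^2 = s*s from sq s, Real.log_mul hs0.ne' hs0.ne']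
      linarith
    have : M = Real.log (4*Real.pi) + Real.log L := by
      rw [hMdef]; exact Real.log_mul (by positivity) hL0.ne'
    linarith
  have hbeq : bConst n = u - M/(2*u) := by
    rw [bConst, ← hLdef, ← hMdef, ← hudef]
    congr 1
    rw [show (8:ℝ)*L = 4*(2*L) by ring, Real.sqrt_mul (by norm_num : (0:ℝ) ≤ 4),
      show Real.sqrt 4 = 2 by rw [show (4:ℝ) = 2^2 by norm_num, Real.sqrt_sq (by norm_num)], ← hudef]
  have hMla : M ≤ 2*u*(u-1) := by nlinarith
  have hb1 : 1 ≤ bConst n := by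
    rw [hbeq]
    have : M/(2*u) ≤ u - 1 := (div_le_iff₀ (by positivity)).2 (by nlinarith)
    linarith
  have hb0 : 0 < bConst n := lt_of_lt_of_le one_pos hb1
  have hbub : bConst n ≤ u := by
    rw [hbeq]
    have : 0 ≤ M/(2*u) := div_nonneg hM0 (by positivity)
    linarith
  have hb2ub : bConst n ^2 ≤ 2*L := by nlinarith
  refine ⟨hb1, hb2ub, ?_⟩
  have hb2eq : bConst n ^ 2 = 2*L - M + M^2/(8*L) := by
    have e1 : (u - M/(2*u))^2 = u^2 - M + M^2/(4*u^2) := by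
      field_simp
      ring
    rw [hbeq, e1, hu2, show (4:ℝ)*(2*L) = 8*L by ring]
  have hnpdf : (n:ℝ) * gaussianPDFReal 0 1 (bConst n) = u * Real.exp (-(M^2/(16*L))) := by
    have hn0 : (0:ℝ) < n := by positivity
    simp only [gaussianPDFReal, NNReal.coe_one, mul_one, sub_zero]
    rw [hb2eq, show -(2*L - M + M^2/(8*L))/2 = -L + M/2 + -(M^2/(16*L)) by ring]
    rw [Real.exp_add, Real.exp_add]
    have h1 : Real.exp (-L) = (n:ℝ)⁻¹ := by
      rw [Real.exp_neg, hLdef, Real.exp_log hn0]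
    have h2 : Real.exp (M/2) = Real.sqrt (2*Real.pi) * u := by
      rw [Real.exp_half, hMdef, Real.exp_log (by positivity),
        show (4:ℝ)*Real.pi*L = (2*Real.pi)*(2*L) by ring,
        Real.sqrt_mul (by positivity), ← hudef]
    rw [h1, h2]
    have hsp : Real.sqrt (2*Real.pi) ≠ 0 := by positivity
    field_simp
  have hhalf : (1:ℝ)/2 ≤ Real.exp (-(M^2/(16*L))) := by
    have hlog2 : (0.69:ℝ) ≤ Real.log 2 := le_trans (by norm_num) Real.log_two_gt_d9.le
    have hMsq : M^2 ≤ 11*L := by nlinarith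
    have h16 : 11*L ≤ 16*L*Real.log 2 := by nlinarith
    have : M^2/(16*L) ≤ Real.log 2 := by
      rw [div_le_iff₀ (by positivity)]
      nlinarith
    calc (1:ℝ)/2 = Real.exp (-(Real.log 2)) := by
          rw [Real.exp_neg, Real.exp_log (by norm_num)]; norm_num
      _ ≤ Real.exp (-(M^2/(16*L))) := Real.exp_le_exp.2 (by linarith)
  rw [hnpdf, le_div_iff₀ hb0]
  nlinarith [Real.exp_pos (-(M^2/(16*L))), hhalf, hbub, hu0]

lemma exp_quarter (k : ℕ) : (1 + (k:ℝ)/4)^2 ≤ Real.exp ((k:ℝ)/2) := by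
  have h1 : Real.exp ((k:ℝ)/2) = Real.exp ((k:ℝ)/4)^2 := by
    rw [sq, ← Real.exp_add]; ring_nf
  rw [h1]
  have h2 : 1 + (k:ℝ)/4 ≤ Real.exp ((k:ℝ)/4) := by
    have := Real.add_one_le_exp ((k:ℝ)/4); linarith
  have h3 : (0:ℝ) ≤ 1 + (k:ℝ)/4 := by positivity
  exact pow_le_pow_left₀ h3 h2 2

lemma termA_le {θ : ℝ} (hθ : 0 < θ) (k : ℕ) :
    Real.exp (2*θ*((k:ℝ)+1)) * Real.exp (-(Real.exp ((k:ℝ)/2)/9))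
      ≤ Real.exp (36*(2*θ+1)^2 + 2*θ) * Real.exp (-(k:ℝ)) := by
  rw [← Real.exp_add, ← Real.exp_add]
  apply Real.exp_le_exp.2
  have hek := exp_quarter k
  nlinarith [sq_nonneg ((k:ℝ)/12 - 6*(2*θ+1)), Nat.cast_nonneg (α := ℝ) k]

lemma sum_exp_neg_le (K : ℕ) : ∑ k ∈ Finset.range K, Real.exp (-(k:ℝ)) ≤ 2 := by
  calc ∑ k ∈ Finset.range K, Real.exp (-(k:ℝ))
      ≤ ∑ k ∈ Finset.range K, (1/(2:ℝ))^k := by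
        apply Finset.sum_le_sum
        intro k _
        have h1 : Real.exp (-(k:ℝ)) = Real.exp (-1)^k := by
          rw [← Real.exp_nat_mul]; ring_nf
        rw [h1]
        apply pow_le_pow_left₀ (Real.exp_pos _).le
        rw [Real.exp_neg]
        rw [inv_le_comm₀ (Real.exp_pos 1) (by norm_num)]
        norm_num
        nlinarith [Real.add_one_le_exp (1:ℝ)]
    _ ≤ 2 := sum_geometric_two_le K

lemma log_le_two_sqrt {x : ℝ} (hx : 1 ≤ x) : Real.log x ≤ 2 * Real.sqrt x := by
  have h0 : 0 < Real.sqrt x := Real.sqrt_pos.2 (by linarith)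
  have h1 : Real.log (Real.sqrt x) = Real.log x / 2 :=
    Real.log_sqrt (by linarith)
  have h2 := Real.log_le_sub_one_of_pos h0
  have h3 : 0 ≤ Real.sqrt x := h0.le
  linarith

lemma eventually_sumB {θ : ℝ} (hθ : 0 < θ) :
    ∀ᶠ (n:ℕ) in atTop, (2*Real.log n + 1) * Real.exp (2*θ*(2*Real.log n + 1))
      ≤ Real.exp ((n:ℝ)/25) := by
  set A := 1 + 2*θ with hA
  have hA1 : 1 ≤ A := by linarith
  rw [eventually_atTop]
  refine ⟨⌈(100*A+25)^2⌉₊ + 1, fun n hn => ?_⟩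
  have hn1 : 1 ≤ n := le_trans (Nat.le_add_left 1 _) hn
  have hnR : ((100*A+25)^2 : ℝ) ≤ (n:ℝ) := by
    calc ((100*A+25)^2:ℝ) ≤ (⌈(100*A+25)^2⌉₊ : ℝ) := Nat.le_ceil _
      _ ≤ (n:ℝ) := by exact_mod_cast le_trans (Nat.le_succ _) hn
  set x := Real.sqrt (n:ℝ) with hxdef
  have hx2 : x^2 = (n:ℝ) := Real.sq_sqrt (by positivity)
  have hxA : 100*A+25 ≤ x := by
    rw [hxdef]
    rw [show (100*A+25 : ℝ) = Real.sqrt ((100*A+25)^2) from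
      (Real.sqrt_sq (by positivity)).symm]
    exact Real.sqrt_le_sqrt hnR
  have hL1 : (1:ℝ) ≤ (n:ℝ) := by exact_mod_cast hn1
  have hlog : Real.log n ≤ 2*x := log_le_two_sqrt hL1
  have hL0 : 0 ≤ Real.log n := Real.log_nonneg hL1
  set L := Real.log (n:ℝ) with hLdef
  clear_value A x L
  have hpos : (0:ℝ) < 2*L + 1 := by linarith
  have hmain : Real.log (2*L+1) + 2*θ*(2*L+1) ≤ (n:ℝ)/25 := by
    have hlog2 : Real.log (2*L+1) ≤ 2*L := by
      have := Real.log_le_sub_one_of_pos hpos; linarith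
    have h2 : 2*L + 2*θ*(2*L+1) ≤ A*(2*L+1) := by rw [hA]; ring_nf; linarith
    have h3 : A*(2*L+1) ≤ A*(4*x+1) := by
      apply mul_le_mul_of_nonneg_left _ (by linarith)
      linarith
    have h4 : A*(4*x+1) ≤ (n:ℝ)/25 := by
      rw [← hx2]
      nlinarith
    linarith
  calc (2*L + 1) * Real.exp (2*θ*(2*L + 1))
      = Real.exp (Real.log (2*L+1) + 2*θ*(2*L+1)) := by
        rw [Real.exp_add, Real.exp_log hpos]
    _ ≤ Real.exp ((n:ℝ)/25) := Real.exp_le_exp.2 hmain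

lemma prob_iInter_le {Ω : Type*} [MeasurableSpace Ω] (P : Measure Ω) [IsProbabilityMeasure P]
    (Z : ℕ → Ω → ℝ)
    (hind : iIndepFun Z P)
    (hae : ∀ i, AEMeasurable (Z i) P)
    (hZ : ∀ i, Measure.map (Z i) P = gaussianReal 0 1)
    (n : ℕ) (t : ℝ) :
    P {ω | ∀ i ∈ Finset.range n, Z i ω ≤ t} = (gaussianReal 0 1 (Set.Iic t))^n := by
  have h1 : {ω | ∀ i ∈ Finset.range n, Z i ω ≤ t} = ⋂ i ∈ Finset.range n, Z i ⁻¹' (Set.Iic t) := by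
    ext ω; simp [Set.mem_iInter]
  rw [h1, hind.meas_biInter (fun i _ => ⟨Set.Iic t, measurableSet_Iic, rfl⟩)]
  have h2 : ∀ i, P (Z i ⁻¹' (Set.Iic t)) = gaussianReal 0 1 (Set.Iic t) := fun i => by
    rw [← hZ i, Measure.map_apply_of_aemeasurable (hae i) measurableSet_Iic]
  simp [h2]

lemma phi_nonneg (t : ℝ) : 0 ≤ PhiR t := ENNReal.toReal_nonneg

lemma phi_le_exp (t : ℝ) : PhiR t ≤ Real.exp (-(PsiR t)) := by
  have h := phi_add_psi t
  have h2 := Real.add_one_le_exp (-(PsiR t))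
  linarith

lemma phi_mono {s t : ℝ} (h : s ≤ t) : PhiR s ≤ PhiR t :=
  ENNReal.toReal_mono (measure_ne_top _ _) (measure_mono (Set.Iic_subset_Iic.2 h))

lemma main_bound {Ω : Type*} [MeasurableSpace Ω] (P : Measure Ω) [IsProbabilityMeasure P]
    (S : Ω → ℝ) (hS : Measurable S) (hS0 : ∀ ω, 0 ≤ S ω)
    {n : ℕ} (hn : 2 ≤ n)
    (hdist : ∀ t : ℝ, 0 ≤ t → P {ω | S ω ≤ t} = (gaussianReal 0 1 (Set.Iic t))^n)
    {θ : ℝ} (hθ : 0 < θ)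
    (h9 : 9 ≤ Real.log n)
    (hB : (2*Real.log n + 1) * Real.exp (2*θ*(2*Real.log n + 1)) ≤ Real.exp ((n:ℝ)/25)) :
    ∫ ω, Real.exp (-θ * S ω ^ 2) ∂P
      ≤ (2 + 2*Real.exp (36*(2*θ+1)^2 + 2*θ)) * Real.exp (-θ * bConst n ^ 2) := by
  obtain ⟨hb1, hb2ub, hnpdfb⟩ := bFacts n hn h9
  set b := bConst n with hbdef
  have hb0 : 0 < b := lt_of_lt_of_le one_pos hb1
  set K := Nat.floor (b^2) + 1 with hKdef
  set t : ℕ → ℝ := fun k => b - k/b with htdef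
  have hkb2 : ∀ k ∈ Finset.range K, (k:ℝ) ≤ b^2 := by
    intro k hk
    rw [Finset.mem_range, hKdef, Nat.lt_succ_iff] at hk
    calc (k:ℝ) ≤ (Nat.floor (b^2) : ℝ) := by exact_mod_cast hk
      _ ≤ b^2 := Nat.floor_le (sq_nonneg b)
  have htk0 : ∀ k ∈ Finset.range K, 0 ≤ t k := by
    intro k hk
    have h1 := hkb2 k hk
    have : (k:ℝ)/b ≤ b := by
      rw [div_le_iff₀ hb0]; nlinarith
    simp only [htdef]; linarith
  have htkb : ∀ k, t k ≤ b := by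
    intro k
    simp only [htdef]
    have : 0 ≤ (k:ℝ)/b := by positivity
    linarith
  -- measurable sets
  have hAm : ∀ k, MeasurableSet {ω | S ω ≤ t k} := fun k => hS measurableSet_Iic
  -- pointwise bound
  have hptw : ∀ ω, Real.exp (-θ * S ω ^ 2) ≤
      Real.exp (-θ * b^2) + ∑ k ∈ Finset.range K,
        Set.indicator {ω' | S ω' ≤ t k} (fun _ => Real.exp (-θ*b^2 + 2*θ*((k:ℝ)+1))) ω := by
    intro ω
    have hsum_nonneg : ∀ k ∈ Finset.range K,
        0 ≤ Set.indicator {ω' | S ω' ≤ t k} (fun _ => Real.exp (-θ*b^2 + 2*θ*((k:ℝ)+1))) ω :=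
      fun k _ => Set.indicator_nonneg (fun _ _ => (Real.exp_pos _).le) ω
    rcases le_or_gt b (S ω) with hcase | hcase
    · have h1 : Real.exp (-θ * S ω ^ 2) ≤ Real.exp (-θ * b^2) := by
        apply Real.exp_le_exp.2
        nlinarith [hS0 ω, mul_self_le_mul_self hb0.le hcase, hθ.le]
      have h2 : 0 ≤ ∑ k ∈ Finset.range K,
          Set.indicator {ω' | S ω' ≤ t k} (fun _ => Real.exp (-θ*b^2 + 2*θ*((k:ℝ)+1))) ω :=
        Finset.sum_nonneg hsum_nonneg
      linarith
    · set y := b * (b - S ω) with hydef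
      have hy0 : 0 ≤ y := by nlinarith
      set k0 := Nat.floor y with hk0def
      have hk0y : (k0:ℝ) ≤ y := Nat.floor_le hy0
      have hyk0 : y < (k0:ℝ) + 1 := Nat.lt_floor_add_one y
      have hk0K : k0 ∈ Finset.range K := by
        rw [Finset.mem_range, hKdef, Nat.lt_succ_iff]
        apply Nat.floor_le_floor
        nlinarith [hS0 ω]
      have hmem : ω ∈ {ω' | S ω' ≤ t k0} := by
        simp only [Set.mem_setOf_eq, htdef]
        have hdiv : (k0:ℝ)/b ≤ b - S ω := (div_le_iff₀ hb0).2 (by nlinarith)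
        linarith
      have h1 : Real.exp (-θ * S ω ^ 2) ≤ Real.exp (-θ*b^2 + 2*θ*((k0:ℝ)+1)) := by
        apply Real.exp_le_exp.2
        nlinarith [sq_nonneg (S ω - b)]
      have h2 : Real.exp (-θ*b^2 + 2*θ*((k0:ℝ)+1)) ≤ ∑ k ∈ Finset.range K,
          Set.indicator {ω' | S ω' ≤ t k} (fun _ => Real.exp (-θ*b^2 + 2*θ*((k:ℝ)+1))) ω := by
        have h3 : Set.indicator {ω' | S ω' ≤ t k0} (fun _ => Real.exp (-θ*b^2 + 2*θ*((k0:ℝ)+1))) ω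
            = Real.exp (-θ*b^2 + 2*θ*((k0:ℝ)+1)) := Set.indicator_of_mem hmem _
        rw [← h3]
        exact Finset.single_le_sum hsum_nonneg hk0K
      have h4 : (0:ℝ) ≤ Real.exp (-θ * b^2) := (Real.exp_pos _).le
      linarith
  -- integrability
  have hmeasL : Measurable fun ω => Real.exp (-θ * S ω ^ 2) :=
    Real.measurable_exp.comp ((hS.pow_const 2).const_mul (-θ))
  have hIntL : Integrable (fun ω => Real.exp (-θ * S ω ^ 2)) P := by
    refine (integrable_const (1:ℝ)).mono' hmeasL.aestronglyMeasurable (ae_of_all _ fun ω => ?_)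
    rw [Real.norm_eq_abs, abs_of_pos (Real.exp_pos _)]
    exact Real.exp_le_one_iff.2 (by nlinarith [sq_nonneg (S ω)])
  have hIntInd : ∀ k, Integrable (fun ω => Set.indicator {ω' | S ω' ≤ t k}
      (fun _ => Real.exp (-θ*b^2 + 2*θ*((k:ℝ)+1))) ω) P := fun k =>
    (integrable_const _).indicator (hAm k)
  have hIntR : Integrable (fun ω => Real.exp (-θ * b^2) + ∑ k ∈ Finset.range K,
      Set.indicator {ω' | S ω' ≤ t k} (fun _ => Real.exp (-θ*b^2 + 2*θ*((k:ℝ)+1))) ω) P :=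
    (integrable_const _).add (integrable_finset_sum _ fun k _ => hIntInd k)
  have hInt_le := integral_mono hIntL hIntR hptw
  have hRHS : ∫ ω, (Real.exp (-θ * b^2) + ∑ k ∈ Finset.range K,
      Set.indicator {ω' | S ω' ≤ t k} (fun _ => Real.exp (-θ*b^2 + 2*θ*((k:ℝ)+1))) ω) ∂P
      = Real.exp (-θ*b^2) + ∑ k ∈ Finset.range K,
        (P {ω | S ω ≤ t k}).toReal * Real.exp (-θ*b^2 + 2*θ*((k:ℝ)+1)) := by
    rw [integral_add (integrable_const _) (integrable_finset_sum _ fun k _ => hIntInd k),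
      integral_const, measureReal_def, measure_univ, ENNReal.toReal_one, one_smul,
      integral_finset_sum _ (fun k _ => hIntInd k)]
    congr 1
    refine Finset.sum_congr rfl fun k _ => ?_
    rw [integral_indicator_const _ (hAm k), smul_eq_mul, measureReal_def]
  have hPt : ∀ k ∈ Finset.range K, (P {ω | S ω ≤ t k}).toReal = PhiR (t k)^n := by
    intro k hk
    rw [hdist (t k) (htk0 k hk), ENNReal.toReal_pow]
    rfl
  -- per-k bound on PhiR (t k)^n
  have hPhiKn : ∀ k ∈ Finset.range K, PhiR (t k)^n
      ≤ Real.exp (-(Real.exp ((k:ℝ)/2)/9)) + Real.exp (-((n:ℝ)/25)) := by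
    intro k hk
    rcases le_or_gt 1 (t k) with h1 | h1
    · have hpsi := psi_ge h1
      have htk_pos : 0 < t k := lt_of_lt_of_le one_pos h1
      have hpdf_eq : gaussianPDFReal 0 1 (t k)
          = gaussianPDFReal 0 1 b * Real.exp ((k:ℝ) - (k:ℝ)^2/(2*b^2)) := by
        simp only [gaussianPDFReal, NNReal.coe_one, mul_one, sub_zero]
        rw [mul_assoc, ← Real.exp_add]
        congr 1
        rw [Real.exp_eq_exp]
        simp only [htdef]
        field_simp
        ring
      have hpdf_ge : gaussianPDFReal 0 1 b * Real.exp ((k:ℝ)/2) ≤ gaussianPDFReal 0 1 (t k) := by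
        rw [hpdf_eq]
        refine mul_le_mul_of_nonneg_left ?_ (gaussianPDFReal_nonneg 0 1 b)
        apply Real.exp_le_exp.2
        have hkb := hkb2 k hk
        have hstep : (k:ℝ)^2/(2*b^2) ≤ (k:ℝ)/2 := by
          rw [div_le_div_iff₀ (by positivity) (by norm_num)]
          nlinarith [Nat.cast_nonneg (α:=ℝ) k]
        linarith
      have h2 : Real.exp (-(3/2)) * (gaussianPDFReal 0 1 b * Real.exp ((k:ℝ)/2)) / b
          ≤ PsiR (t k) := by
        refine le_trans (div_le_div₀ (mul_nonneg (Real.exp_pos _).le (gaussianPDFReal_nonneg 0 1 (t k))) ?_ htk_pos (htkb k)) hpsi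
        exact mul_le_mul_of_nonneg_left hpdf_ge (Real.exp_pos _).le
      have h3 : Real.exp ((k:ℝ)/2)/9 ≤ (n:ℝ) * PsiR (t k) := by
        have hmul := mul_le_mul_of_nonneg_left h2 (Nat.cast_nonneg (α:=ℝ) n)
        have hq : (2:ℝ)/9 ≤ Real.exp (-(3/2)) := by
          rw [Real.exp_neg]
          rw [le_inv_comm₀ (by norm_num) (Real.exp_pos _)]
          calc Real.exp (3/2) ≤ 4.5 := exp_threehalf_le
            _ ≤ ((2:ℝ)/9)⁻¹ := by norm_num
        set E := Real.exp ((k:ℝ)/2) with hEdef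
        set q := Real.exp (-(3/2)) with hqdef
        set D := (n:ℝ) * gaussianPDFReal 0 1 b / b with hDdef
        have hEpos : 0 < E := Real.exp_pos _
        have halg : (n:ℝ) * (q * (gaussianPDFReal 0 1 b * E) / b) = q * (E * D) := by
          rw [hDdef]
          field_simp
        rw [halg] at hmul
        refine le_trans ?_ hmul
        have s2 : E*(1/2) ≤ E*D := mul_le_mul_of_nonneg_left hnpdfb hEpos.le
        have s1 : (2:ℝ)/9 * (E*D) ≤ q*(E*D) := by
          refine mul_le_mul_of_nonneg_right hq ?_
          nlinarith
        nlinarith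
      have h4 : PhiR (t k)^n ≤ Real.exp (-((n:ℝ) * PsiR (t k))) := by
        calc PhiR (t k)^n ≤ Real.exp (-(PsiR (t k)))^n :=
              pow_le_pow_left₀ (phi_nonneg _) (phi_le_exp _) n
          _ = Real.exp (-((n:ℝ) * PsiR (t k))) := by
              rw [← Real.exp_nat_mul]; congr 1; ring
      have h5 : Real.exp (-((n:ℝ) * PsiR (t k))) ≤ Real.exp (-(Real.exp ((k:ℝ)/2)/9)) :=
        Real.exp_le_exp.2 (by linarith)
      have h6 : (0:ℝ) < Real.exp (-((n:ℝ)/25)) := Real.exp_pos _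
      linarith
    · have h5 : PhiR (t k) ≤ Real.exp (-(1/25)) :=
        le_trans (phi_mono h1.le) (le_trans (phi_le_exp 1)
          (Real.exp_le_exp.2 (by linarith [psi_one])))
      have h6 : PhiR (t k)^n ≤ Real.exp (-(1/25))^n :=
        pow_le_pow_left₀ (phi_nonneg _) h5 n
      have h7 : Real.exp (-(1/25:ℝ))^n = Real.exp (-((n:ℝ)/25)) := by
        rw [← Real.exp_nat_mul]; congr 1; ring
      have h8 : (0:ℝ) < Real.exp (-(Real.exp ((k:ℝ)/2)/9)) := Real.exp_pos _
      rw [h7] at h6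
      linarith
  -- bound the sum
  set C1 := Real.exp (36*(2*θ+1)^2 + 2*θ) with hC1def
  have hsumbound : ∑ k ∈ Finset.range K, Real.exp (2*θ*((k:ℝ)+1)) * PhiR (t k)^n
      ≤ 2*C1 + 1 := by
    have hsplit : ∑ k ∈ Finset.range K, Real.exp (2*θ*((k:ℝ)+1)) * PhiR (t k)^n
        ≤ (∑ k ∈ Finset.range K, Real.exp (2*θ*((k:ℝ)+1)) * Real.exp (-(Real.exp ((k:ℝ)/2)/9)))
          + ∑ k ∈ Finset.range K, Real.exp (2*θ*((k:ℝ)+1)) * Real.exp (-((n:ℝ)/25)) := by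
      rw [← Finset.sum_add_distrib]
      refine Finset.sum_le_sum fun k hk => ?_
      rw [← mul_add]
      exact mul_le_mul_of_nonneg_left (hPhiKn k hk) (Real.exp_pos _).le
    have hA : ∑ k ∈ Finset.range K, Real.exp (2*θ*((k:ℝ)+1)) * Real.exp (-(Real.exp ((k:ℝ)/2)/9))
        ≤ 2*C1 := by
      calc ∑ k ∈ Finset.range K, Real.exp (2*θ*((k:ℝ)+1)) * Real.exp (-(Real.exp ((k:ℝ)/2)/9))
          ≤ ∑ k ∈ Finset.range K, C1 * Real.exp (-(k:ℝ)) :=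
            Finset.sum_le_sum fun k _ => termA_le hθ k
        _ = C1 * ∑ k ∈ Finset.range K, Real.exp (-(k:ℝ)) := by rw [Finset.mul_sum]
        _ ≤ C1 * 2 := mul_le_mul_of_nonneg_left (sum_exp_neg_le K) (Real.exp_pos _).le
        _ = 2*C1 := mul_comm _ _
    have hBsum : ∑ k ∈ Finset.range K, Real.exp (2*θ*((k:ℝ)+1)) * Real.exp (-((n:ℝ)/25))
        ≤ 1 := by
      have hterm : ∀ k ∈ Finset.range K, Real.exp (2*θ*((k:ℝ)+1)) ≤ Real.exp (2*θ*(K:ℝ)) := by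
        intro k hk
        rw [Finset.mem_range] at hk
        have : (k:ℝ)+1 ≤ (K:ℝ) := by exact_mod_cast hk
        exact Real.exp_le_exp.2 (by nlinarith)
      have hKle : (K:ℝ) ≤ 2*Real.log n + 1 := by
        rw [hKdef]
        push_cast
        have := Nat.floor_le (sq_nonneg b)
        linarith
      calc ∑ k ∈ Finset.range K, Real.exp (2*θ*((k:ℝ)+1)) * Real.exp (-((n:ℝ)/25))
          = (∑ k ∈ Finset.range K, Real.exp (2*θ*((k:ℝ)+1))) * Real.exp (-((n:ℝ)/25)) := by
            rw [Finset.sum_mul]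
        _ ≤ ((K:ℝ) * Real.exp (2*θ*(K:ℝ))) * Real.exp (-((n:ℝ)/25)) := by
            refine mul_le_mul_of_nonneg_right ?_ (Real.exp_pos _).le
            calc ∑ k ∈ Finset.range K, Real.exp (2*θ*((k:ℝ)+1))
                ≤ ∑ _k ∈ Finset.range K, Real.exp (2*θ*(K:ℝ)) := Finset.sum_le_sum hterm
              _ = (K:ℝ) * Real.exp (2*θ*(K:ℝ)) := by
                  rw [Finset.sum_const, Finset.card_range, nsmul_eq_mul]
        _ ≤ ((2*Real.log n + 1) * Real.exp (2*θ*(2*Real.log n + 1))) * Real.exp (-((n:ℝ)/25)) := by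
            refine mul_le_mul_of_nonneg_right ?_ (Real.exp_pos _).le
            refine mul_le_mul hKle (Real.exp_le_exp.2 (by nlinarith)) (Real.exp_pos _).le ?_
            positivity
        _ ≤ Real.exp ((n:ℝ)/25) * Real.exp (-((n:ℝ)/25)) :=
            mul_le_mul_of_nonneg_right hB (Real.exp_pos _).le
        _ = 1 := by rw [← Real.exp_add]; simp
    linarith
  -- final assembly
  have hfinal : Real.exp (-θ*b^2) + ∑ k ∈ Finset.range K,
      (P {ω | S ω ≤ t k}).toReal * Real.exp (-θ*b^2 + 2*θ*((k:ℝ)+1))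
      ≤ (2 + 2*C1) * Real.exp (-θ * b^2) := by
    have hsum_eq : ∑ k ∈ Finset.range K,
        (P {ω | S ω ≤ t k}).toReal * Real.exp (-θ*b^2 + 2*θ*((k:ℝ)+1))
        = Real.exp (-θ*b^2) * ∑ k ∈ Finset.range K,
            Real.exp (2*θ*((k:ℝ)+1)) * PhiR (t k)^n := by
      rw [Finset.mul_sum]
      refine Finset.sum_congr rfl fun k hk => ?_
      rw [hPt k hk, Real.exp_add]
      ring
    rw [hsum_eq]
    have := mul_le_mul_of_nonneg_left hsumbound (Real.exp_pos (-θ*b^2)).le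
    nlinarith [Real.exp_pos (-θ*b^2)]
  calc ∫ ω, Real.exp (-θ * S ω ^ 2) ∂P
      ≤ ∫ ω, (Real.exp (-θ * b^2) + ∑ k ∈ Finset.range K,
        Set.indicator {ω' | S ω' ≤ t k} (fun _ => Real.exp (-θ*b^2 + 2*θ*((k:ℝ)+1))) ω) ∂P :=
        hInt_le
    _ = _ := hRHS
    _ ≤ (2 + 2*C1) * Real.exp (-θ * b^2) := hfinal
/-- For `V_n` the maximum of `n` i.i.d. standard Gaussians and every `θ > 0`
there is `γ(θ) > 0` with `E[exp(−θ max{V_n,0}²)] ≤ γ(θ) exp(−θ b_n²)` for all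
`n ≥ 1`. -/
theorem exp_moment_max_gaussian
    {Ω : Type*} [MeasurableSpace Ω] (P : Measure Ω) [IsProbabilityMeasure P]
    (Z : ℕ → Ω → ℝ)
    (hind : iIndepFun Z P)
    (hZ : ∀ i, Measure.map (Z i) P = gaussianReal 0 1)
    (θ : ℝ) (hθ : 0 < θ) :
    ∃ γ : ℝ, 0 < γ ∧ ∀ n : ℕ, 1 ≤ n →
      ∫ ω, Real.exp (-θ * max (⨆ i : Fin n, Z i ω) 0 ^ 2) ∂P
        ≤ γ * Real.exp (-θ * bConst n ^ 2) := by
  have hae : ∀ i, AEMeasurable (Z i) P := by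
    intro i
    by_contra h
    have h0 : Measure.map (Z i) P = 0 := Measure.map_of_not_aemeasurable h
    rw [hZ i] at h0
    exact IsProbabilityMeasure.ne_zero (gaussianReal 0 1) h0
  set W : ℕ → Ω → ℝ := fun i => (hae i).mk (Z i) with hWdef
  have hWm : ∀ i, Measurable (W i) := fun i => (hae i).measurable_mk
  have hZW : ∀ᵐ ω ∂P, ∀ i, Z i ω = W i ω := by
    rw [MeasureTheory.ae_all_iff]
    exact fun i => (hae i).ae_eq_mk
  set S : ℕ → Ω → ℝ := fun n ω => max (⨆ i : Fin n, W i ω) 0 with hSdef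
  have hSmeas : ∀ n, 1 ≤ n → Measurable (S n) := by
    intro n hn
    have hne : Nonempty (Fin n) := Fin.pos_iff_nonempty.1 hn
    have h2 : Measurable fun ω => ⨆ i : Fin n, W i ω := by
      have hm := Finset.measurable_sup' (Finset.univ_nonempty (α := Fin n))
        (fun (i : Fin n) _ => hWm i)
      have heq : (Finset.univ.sup' Finset.univ_nonempty fun i : Fin n => W i)
          = fun ω => ⨆ i : Fin n, W i ω := by
        funext ω
        rw [Finset.sup'_apply, Finset.sup'_univ_eq_ciSup]
      rwa [heq] at hm
    exact h2.max measurable_const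
  have hS0 : ∀ n ω, 0 ≤ S n ω := fun n ω => le_max_right _ _
  have hdist : ∀ n, 1 ≤ n → ∀ t : ℝ, 0 ≤ t →
      P {ω | S n ω ≤ t} = (gaussianReal 0 1 (Set.Iic t))^n := by
    intro n hn t ht
    have hne : Nonempty (Fin n) := Fin.pos_iff_nonempty.1 hn
    have hset : {ω | S n ω ≤ t} =ᵐ[P] {ω | ∀ i ∈ Finset.range n, Z i ω ≤ t} := by
      refine Filter.eventuallyEq_set.2 ?_
      filter_upwards [hZW] with ω hω
      have hbdd : BddAbove (Set.range fun i : Fin n => W i ω) :=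
        Set.Finite.bddAbove (Set.finite_range _)
      simp only [Set.mem_setOf_eq, hSdef]
      rw [max_le_iff, ciSup_le_iff hbdd]
      constructor
      · intro h i hi
        rw [hω i]
        exact h.1 ⟨i, Finset.mem_range.1 hi⟩
      · intro h
        exact ⟨fun i => by rw [← hω i]; exact h i (Finset.mem_range.2 i.2), ht⟩
    rw [measure_congr hset]
    exact prob_iInter_le P Z hind hae hZ n t
  have haeq : ∀ n, ∫ ω, Real.exp (-θ * max (⨆ i : Fin n, Z i ω) 0 ^ 2) ∂P
      = ∫ ω, Real.exp (-θ * S n ω ^ 2) ∂P := by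
    intro n
    refine integral_congr_ae ?_
    filter_upwards [hZW] with ω hω
    have hsup : (⨆ i : Fin n, Z i ω) = ⨆ i : Fin n, W i ω := iSup_congr fun i => hω i
    simp only [hSdef]
    rw [hsup]
  have hE1 : ∀ n, 1 ≤ n → ∫ ω, Real.exp (-θ * S n ω ^ 2) ∂P ≤ 1 := by
    intro n hn
    have hmeasL : Measurable fun ω => Real.exp (-θ * S n ω ^ 2) :=
      Real.measurable_exp.comp (((hSmeas n hn).pow_const 2).const_mul (-θ))
    have hIntL : Integrable (fun ω => Real.exp (-θ * S n ω ^ 2)) P := by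
      refine (integrable_const (1:ℝ)).mono' hmeasL.aestronglyMeasurable
        (ae_of_all _ fun ω => ?_)
      rw [Real.norm_eq_abs, abs_of_pos (Real.exp_pos _)]
      exact Real.exp_le_one_iff.2 (by nlinarith [sq_nonneg (S n ω)])
    calc ∫ ω, Real.exp (-θ * S n ω ^ 2) ∂P ≤ ∫ _ω, (1:ℝ) ∂P := by
          refine integral_mono hIntL (integrable_const 1) fun ω => ?_
          exact Real.exp_le_one_iff.2 (by nlinarith [sq_nonneg (S n ω)])
      _ = 1 := by simp
  set C : ℝ := 2 + 2*Real.exp (36*(2*θ+1)^2 + 2*θ) with hCdef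
  have hCpos : 0 < C := by positivity
  have hev : ∀ᶠ n:ℕ in atTop, ∫ ω, Real.exp (-θ * S n ω ^ 2) ∂P
      ≤ C * Real.exp (-θ * bConst n ^ 2) := by
    have h9 : ∀ᶠ n:ℕ in atTop, 9 ≤ Real.log n :=
      (Real.tendsto_log_atTop.comp tendsto_natCast_atTop_atTop).eventually_ge_atTop 9
    filter_upwards [h9, eventually_sumB hθ, eventually_ge_atTop 2] with n h9' hB' hn2
    exact main_bound P (S n) (hSmeas n (le_trans one_le_two hn2)) (hS0 n) hn2
      (hdist n (le_trans one_le_two hn2)) hθ h9' hB'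
  obtain ⟨N, hN⟩ := Filter.eventually_atTop.1 hev
  refine ⟨C + ∑ m ∈ Finset.range N, Real.exp (θ * bConst m ^ 2), by positivity, ?_⟩
  intro n hn
  rw [haeq n]
  have hsum_nonneg : (0:ℝ) ≤ ∑ m ∈ Finset.range N, Real.exp (θ * bConst m ^ 2) :=
    Finset.sum_nonneg fun m _ => (Real.exp_pos _).le
  rcases le_or_gt N n with hcase | hcase
  · calc ∫ ω, Real.exp (-θ * S n ω ^ 2) ∂P ≤ C * Real.exp (-θ * bConst n ^ 2) := hN n hcase
      _ ≤ (C + ∑ m ∈ Finset.range N, Real.exp (θ * bConst m ^ 2))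
            * Real.exp (-θ * bConst n ^ 2) := by
          refine mul_le_mul_of_nonneg_right ?_ (Real.exp_pos _).le
          linarith
  · calc ∫ ω, Real.exp (-θ * S n ω ^ 2) ∂P ≤ 1 := hE1 n hn
      _ = Real.exp (θ * bConst n ^ 2) * Real.exp (-θ * bConst n ^ 2) := by
          rw [← Real.exp_add]
          rw [show θ * bConst n ^ 2 + -θ * bConst n ^ 2 = 0 by ring, Real.exp_zero]
      _ ≤ (C + ∑ m ∈ Finset.range N, Real.exp (θ * bConst m ^ 2))
            * Real.exp (-θ * bConst n ^ 2) := by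
          refine mul_le_mul_of_nonneg_right ?_ (Real.exp_pos _).le
          have hmem : Real.exp (θ * bConst n ^ 2)
              ≤ ∑ m ∈ Finset.range N, Real.exp (θ * bConst m ^ 2) :=
            Finset.single_le_sum (fun m _ => (Real.exp_pos (θ * bConst m ^ 2)).le)
              (Finset.mem_range.2 hcase)
          linarith
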